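/- If X is an eigenvector equation witness: M x = λ x with |λ| ≥ 1, Y Hermitian positive semidefinite, and Y − M^H Y M ≥ K₁ + K₂ with K₁, K₂ positive semidefinite, then x^H K₁ x = 0 and x^H K₂ x = 0, hence K₁ x = 0 and K₂ x = 0. -/

import Mathlib

open Matrix
open scoped ComplexOrder

theorem stmt6 (n : ℕ) (M Y K₁ K₂ : Matrix (Fin n) (Fin n) ℂ)
    (x : Fin n → ℂ) (hx : x ≠ 0) (lam : ℂ) (hlam : 1 ≤ ‖lam‖)
    (heig : M.mulVec x = lam • x)
    (hY : Y.PosSemidef) (hK₁ : K₁.PosSemidef) (hK₂ : K₂.PosSemidef)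
    (hineq : ((Y - Mᴴ * Y * M) - (K₁ + K₂)).PosSemidef) :
    star x ⬝ᵥ K₁.mulVec x = 0 ∧ star x ⬝ᵥ K₂.mulVec x = 0 ∧
      K₁.mulVec x = 0 ∧ K₂.mulVec x = 0 := by
  set a := star x ⬝ᵥ Y *ᵥ x with ha
  set c₁ := star x ⬝ᵥ K₁ *ᵥ x with hc₁
  set c₂ := star x ⬝ᵥ K₂ *ᵥ x with hc₂
  have ha0 : 0 ≤ a := hY.dotProduct_mulVec_nonneg x
  have hc₁0 : 0 ≤ c₁ := hK₁.dotProduct_mulVec_nonneg x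
  have hc₂0 : 0 ≤ c₂ := hK₂.dotProduct_mulVec_nonneg x
  -- value of the quadratic form at MᴴYM
  have hb : star x ⬝ᵥ (Mᴴ * Y * M) *ᵥ x = (star lam * lam) * a := by
    have : (Mᴴ * Y * M) *ᵥ x = Mᴴ *ᵥ (Y *ᵥ (M *ᵥ x)) := by
      rw [← mulVec_mulVec, ← mulVec_mulVec]
    rw [this, dotProduct_mulVec, ← star_mulVec, heig]
    rw [star_smul, smul_dotProduct, mulVec_smul, dotProduct_smul]
    simp [ha, mul_assoc, smul_eq_mul]
  have hlam2 : (1 : ℂ) ≤ star lam * lam := by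
    have : star lam * lam = ((‖lam‖ ^ 2 : ℝ) : ℂ) := by
      rw [Complex.star_def, ← Complex.normSq_eq_conj_mul_self, Complex.normSq_eq_norm_sq]
    rw [this]
    norm_cast
    nlinarith
  have hab : a ≤ (star lam * lam) * a := le_mul_of_one_le_left ha0 hlam2
  have hd : 0 ≤ star x ⬝ᵥ ((Y - Mᴴ * Y * M) - (K₁ + K₂)) *ᵥ x := hineq.dotProduct_mulVec_nonneg x
  have hexp : star x ⬝ᵥ ((Y - Mᴴ * Y * M) - (K₁ + K₂)) *ᵥ x
      = (a - (star lam * lam) * a) - (c₁ + c₂) := by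
    rw [sub_mulVec, sub_mulVec, add_mulVec, dotProduct_sub, dotProduct_sub,
      dotProduct_add, hb]
  rw [hexp] at hd
  have hsum : c₁ + c₂ = 0 := by
    have h1 : c₁ + c₂ ≤ 0 := by
      have := add_le_add hd (sub_nonpos.mpr hab)
      simpa using this
    exact le_antisymm h1 (add_nonneg hc₁0 hc₂0)
  have h₁ : c₁ = 0 := le_antisymm (by
    have : c₁ ≤ c₁ + c₂ := le_add_of_nonneg_right hc₂0
    simpa [hsum] using this) hc₁0
  have h₂ : c₂ = 0 := by
    have := hsum; rw [h₁, zero_add] at this; exact this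
  exact ⟨h₁, h₂, (hK₁.dotProduct_mulVec_zero_iff x).mp h₁,
    (hK₂.dotProduct_mulVec_zero_iff x).mp h₂⟩
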